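/- Let m ∈ ℤ₂ with m ≡ 1 (mod 8) and √m the square root of m with √m ≡ 1 (mod 4). Let a, b ∈ ℚ₂, and choose the sign ± so that ord₂(a ± b·(3−m)/2) = min(ord₂(a + b·(3−m)/2), ord₂(a − b·(3−m)/2)). Then (a ± b√m)/(a ± b·(3−m)/2) ≡ 1 (mod 8), hence is a square in ℚ₂^×, and therefore the Hilbert symbol (a ± b√m, C)₂ equals (a ± b·(3−m)/2, C)₂ for any C ∈ ℚ₂^×. -/

import Mathlib

/-- The Hilbert symbol at 2 equals `1`, expressed by the solvability of
`z² = a x² + b y²` nontrivially over `ℚ₂`. -/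
def Hilbert2One (a b : ℚ_[2]) : Prop :=
  ∃ x y z : ℚ_[2], (x ≠ 0 ∨ y ≠ 0 ∨ z ≠ 0) ∧ z ^ 2 = a * x ^ 2 + b * y ^ 2

lemma hilbert_mul_sq (A C y : ℚ_[2]) (hy : y ≠ 0) :
    Hilbert2One (y ^ 2 * A) C ↔ Hilbert2One A C := by
  constructor
  · rintro ⟨X, Y, Z, hnt, hZ⟩
    refine ⟨y * X, Y, Z, ?_, by rw [hZ]; ring⟩
    rcases hnt with h | h | h
    · exact Or.inl (mul_ne_zero hy h)
    · exact Or.inr (Or.inl h)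
    · exact Or.inr (Or.inr h)
  · rintro ⟨X, Y, Z, hnt, hZ⟩
    refine ⟨X / y, Y, Z, ?_, ?_⟩
    · rcases hnt with h | h | h
      · exact Or.inl (div_ne_zero h hy)
      · exact Or.inr (Or.inl h)
      · exact Or.inr (Or.inr h)
    · rw [hZ]; field_simp

lemma two_dvd_add_sq (u : ℤ_[2]) : (2 : ℤ_[2]) ∣ u + u ^ 2 := by
  have key : (PadicInt.toZMod (u + u ^ 2) : ZMod 2) = 0 := by
    have h : ∀ v : ZMod 2, v + v ^ 2 = 0 := by decide
    rw [map_add, map_pow]; exact h _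
  have hk : u + u ^ 2 ∈ RingHom.ker (PadicInt.toZMod (p := 2)) := key
  rw [PadicInt.ker_toZMod, PadicInt.maximalIdeal_eq_span_p, Ideal.mem_span_singleton] at hk
  exact_mod_cast hk

lemma norm_two_int : ‖(2 : ℤ_[2])‖ = 1 / 2 := by
  have := @PadicInt.norm_p 2 ⟨Nat.prime_two⟩
  norm_num at this; exact this

lemma norm_two_rat : ‖(2 : ℚ_[2])‖ = 1 / 2 := by
  have := @Padic.norm_p 2 ⟨Nat.prime_two⟩
  norm_num at this; exact this

/-- let `m = 1 + 8x ∈ ℤ₂`, `s = √m` the square root with `s ≡ 1 (mod 4)`,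
and `t = (3 − m)/2`.  For `a, b ∈ ℚ₂` and a sign `ε = ±1` chosen so that
`ord₂(a + εbt)` is minimal among `ord₂(a ± bt)`, the quotient `(a + εbs)/(a + εbt)`
is `≡ 1 (mod 8)`, hence a square in `ℚ₂^×`, and therefore the Hilbert symbols
`(a + εbs, C)₂` and `(a + εbt, C)₂` agree for every `C ∈ ℚ₂^×`. -/
theorem hilbert_sqrt_approx (m x s t : ℤ_[2]) (hm : m = 1 + 8 * x)
    (hs : s ^ 2 = m) (hs4 : (4 : ℤ_[2]) ∣ (s - 1))
    (ht : 2 * t = 3 - m)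
    (a b ε : ℚ_[2]) (hε : ε = 1 ∨ ε = -1)
    (hne : a + ε * b * (t : ℚ_[2]) ≠ 0)
    (hmin : a - ε * b * (t : ℚ_[2]) = 0 ∨
      (a + ε * b * (t : ℚ_[2])).valuation ≤ (a - ε * b * (t : ℚ_[2])).valuation) :
    (∃ w : ℤ_[2],
        a + ε * b * (s : ℚ_[2]) = (a + ε * b * (t : ℚ_[2])) * (1 + 8 * (w : ℚ_[2]))) ∧
    (∃ y : ℚ_[2], a + ε * b * (s : ℚ_[2]) = y ^ 2 * (a + ε * b * (t : ℚ_[2]))) ∧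
    (∀ C : ℚ_[2], C ≠ 0 →
      (Hilbert2One (a + ε * b * (s : ℚ_[2])) C ↔ Hilbert2One (a + ε * b * (t : ℚ_[2])) C)) := by
  obtain ⟨u, hu⟩ := hs4
  have hus : s = 1 + 4 * u := by linear_combination hu
  -- x = u + 2u²
  have hx : x = u + 2 * u ^ 2 := by
    have h0 : (1 + 4 * u) ^ 2 = 1 + 8 * x := by rw [← hus, hs, hm]
    have h8 : (8 : ℤ_[2]) * (x - (u + 2 * u ^ 2)) = 0 := by linear_combination -h0
    rcases mul_eq_zero.1 h8 with h | h
    · exact absurd h (by norm_num)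
    · linear_combination h
  -- t = 1 - 4x
  have htt : t = 1 - 4 * x := by
    have h2 : (2 : ℤ_[2]) * (t - (1 - 4 * x)) = 0 := by
      rw [hm] at ht; linear_combination ht
    rcases mul_eq_zero.1 h2 with h | h
    · exact absurd h (by norm_num)
    · linear_combination h
  set d : ℤ_[2] := u + u ^ 2 with hd
  have hst : s = t + 8 * d := by rw [hus, htt, hx, hd]; ring
  obtain ⟨c, hc⟩ := two_dvd_add_sq u
  -- ‖ε‖ = 1
  have hεn : ‖ε‖ = 1 := by rcases hε with h | h <;> simp [h]
  -- ‖t‖ = 1 (t is a unit, t = 1 - 4x)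
  have h2cast : ((2 : ℕ) : ℤ_[2]) = 2 := by norm_cast
  have htn : ‖(t : ℚ_[2])‖ = 1 := by
    have hnd : ¬ ((2 : ℕ) : ℤ_[2]) ∣ t := by
      rintro ⟨k, hk⟩
      have h1 : ((2 : ℕ) : ℤ_[2]) ∣ 1 := ⟨k + 2 * x, by rw [h2cast] at hk ⊢; rw [htt] at hk; linear_combination hk⟩
      have := (PadicInt.norm_lt_one_iff_dvd (1 : ℤ_[2])).2 h1
      simp at this
    have := mt (PadicInt.norm_lt_one_iff_dvd t).1 hnd
    have h1 : ‖t‖ = 1 := le_antisymm t.2 (not_lt.1 this)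
    rw [← PadicInt.norm_def, h1]
  set P : ℚ_[2] := a + ε * b * (t : ℚ_[2]) with hP
  set M : ℚ_[2] := a - ε * b * (t : ℚ_[2]) with hM
  have hPn : 0 < ‖P‖ := norm_pos_iff.2 hne
  -- ‖M‖ ≤ ‖P‖
  have hMP : ‖M‖ ≤ ‖P‖ := by
    rcases hmin with h | h
    · rw [h, norm_zero]; exact hPn.le
    · by_cases hM0 : M = 0
      · rw [hM0, norm_zero]; exact hPn.le
      · rw [Padic.norm_eq_zpow_neg_valuation hM0, Padic.norm_eq_zpow_neg_valuation hne]
        exact zpow_le_zpow_right₀ (by norm_num) (neg_le_neg h)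
  -- ‖2b‖ ≤ ‖P‖
  have hb2 : ‖(2 : ℚ_[2]) * b‖ ≤ ‖P‖ := by
    have heq : (2 : ℚ_[2]) * (ε * b * (t : ℚ_[2])) = P + -M := by rw [hP, hM]; ring
    have h1 : ‖(2 : ℚ_[2]) * b‖ = ‖(2 : ℚ_[2]) * (ε * b * (t : ℚ_[2]))‖ := by
      rw [norm_mul, norm_mul, norm_mul, norm_mul, hεn, htn]; ring
    rw [h1, heq]
    calc ‖P + -M‖ ≤ max ‖P‖ ‖-M‖ := Padic.nonarchimedean _ _
      _ ≤ ‖P‖ := by rw [norm_neg]; exact max_le le_rfl hMP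
  -- the candidate w
  have hdn : ‖(d : ℚ_[2])‖ ≤ ‖(2 : ℚ_[2])‖ := by
    have : (d : ℚ_[2]) = 2 * (c : ℚ_[2]) := by rw [hd]; exact_mod_cast congrArg (fun z : ℤ_[2] => (z : ℚ_[2])) hc
    rw [this, norm_mul]
    calc ‖(2:ℚ_[2])‖ * ‖(c:ℚ_[2])‖ ≤ ‖(2:ℚ_[2])‖ * 1 := by
          exact mul_le_mul_of_nonneg_left c.2 (norm_nonneg _)
      _ = ‖(2:ℚ_[2])‖ := mul_one _
  have hw : ‖ε * b * (d : ℚ_[2]) / P‖ ≤ 1 := by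
    rw [norm_div, div_le_one hPn, norm_mul, norm_mul, hεn, one_mul]
    calc ‖b‖ * ‖(d : ℚ_[2])‖ ≤ ‖b‖ * ‖(2 : ℚ_[2])‖ := by
          exact mul_le_mul_of_nonneg_left hdn (norm_nonneg _)
      _ = ‖(2 : ℚ_[2]) * b‖ := by rw [norm_mul]; ring
      _ ≤ ‖P‖ := hb2
  set w : ℤ_[2] := ⟨ε * b * (d : ℚ_[2]) / P, hw⟩ with hwdef
  have hwcoe : (w : ℚ_[2]) = ε * b * (d : ℚ_[2]) / P := rfl
  -- key identity
  have hsQ : (s : ℚ_[2]) = (t : ℚ_[2]) + 8 * (d : ℚ_[2]) := by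
    have := congrArg (fun z : ℤ_[2] => (z : ℚ_[2])) hst
    push_cast at this; exact this
  have key : a + ε * b * (s : ℚ_[2]) = P * (1 + 8 * (w : ℚ_[2])) := by
    rw [hwcoe, hsQ]; field_simp; rw [hP]; ring
  refine ⟨⟨w, key⟩, ?_⟩
  -- Hensel: 1 + 8w is a square
  have h8n : ‖(8 : ℤ_[2])‖ = 1 / 8 := by
    have : (8 : ℤ_[2]) = 2 ^ 3 := by norm_num
    rw [this, norm_pow, norm_two_int]; norm_num
  set F : Polynomial ℤ_[2] := Polynomial.X ^ 2 - Polynomial.C (1 + 8 * w) with hF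
  have hev : F.eval 1 = -(8 * w) := by simp [hF]
  have hdev : F.derivative.eval 1 = 2 := by
    simp [hF, Polynomial.derivative_sub, Polynomial.derivative_X_pow]; norm_num
  have hnorm : ‖F.eval 1‖ < ‖F.derivative.eval 1‖ ^ 2 := by
    rw [hev, hdev, norm_neg, norm_mul, h8n, norm_two_int]
    calc 1 / 8 * ‖w‖ ≤ 1 / 8 * 1 := by
          exact mul_le_mul_of_nonneg_left w.2 (by norm_num)
      _ < (1 / 2) ^ 2 := by norm_num
  obtain ⟨z, hz, -, -, -⟩ := hensels_lemma hnorm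
  have hzsq : z ^ 2 = 1 + 8 * w := by
    rw [hF] at hz; simpa [sub_eq_zero] using hz
  have h18w : (1 : ℤ_[2]) + 8 * w ≠ 0 := by
    intro h
    have h8w : (8 * w : ℤ_[2]) = -1 := by linear_combination h
    have : ‖(8 * w : ℤ_[2])‖ = 1 := by rw [h8w]; simp
    rw [norm_mul, h8n] at this
    linarith [PadicInt.norm_le_one w]
  have hz0 : z ≠ 0 := by
    intro h; apply h18w; rw [← hzsq, h]; ring
  have hzQ : (z : ℚ_[2]) ≠ 0 := PadicInt.coe_ne_zero.2 hz0
  have hzsqQ : ((z : ℚ_[2])) ^ 2 = 1 + 8 * (w : ℚ_[2]) := by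
    have := congrArg (fun v : ℤ_[2] => (v : ℚ_[2])) hzsq
    push_cast at this; exact this
  have key2 : a + ε * b * (s : ℚ_[2]) = ((z : ℚ_[2])) ^ 2 * P := by
    rw [key, hzsqQ]; ring
  exact ⟨⟨(z : ℚ_[2]), key2⟩, fun C _ => by rw [key2]; exact hilbert_mul_sq P C _ hzQ⟩
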